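/- Suppose Σ ∈ P(X) is a weakly compatible irreducible collection of partial splits of X. Then any two split closures of Σ obtained using solely the Y-rule θ_Y (with (P) the property of being weakly compatible) are equal. -/

import Mathlib

/-!
Common definitions: partial splits of a finite set `X`, modelled as unordered
pairs (`Sym2`) of nonempty disjoint subsets of `X`; the `M`-, `Y`- and `Z`-
closure rules; weak compatibility; `X`-cycles and display; split closure
sequences and split closures.
-/

variable {X : Type*}

/-- `S` is a partial split of `X`: an unordered pair of nonempty disjoint subsets of `X`. -/
def IsPartialSplit (S : Sym2 (Set X)) : Prop :=
  ∃ A B : Set X, S = s(A, B) ∧ A.Nonempty ∧ B.Nonempty ∧ Disjoint A B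

/-- `S` is a full split of `X`: a partial split whose two parts cover `X`. -/
def IsFullSplit (S : Sym2 (Set X)) : Prop :=
  ∃ A B : Set X, S = s(A, B) ∧ A.Nonempty ∧ B.Nonempty ∧ Disjoint A B ∧ A ∪ B = Set.univ

/-- The partial split `S` extends the partial split `T`. -/
def SplitExtends (S T : Sym2 (Set X)) : Prop :=
  ∃ A B C D : Set X, S = s(A, B) ∧ T = s(C, D) ∧ C ⊆ A ∧ D ⊆ B

/-- `Sig ⪯ Sig'`: every partial split of `Sig` is extended by one of `Sig'`. -/
def Preceq (Sig Sig' : Set (Sym2 (Set X))) : Prop :=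
  ∀ S ∈ Sig, ∃ T ∈ Sig', SplitExtends T S

/-- `Sig⁻`: the set obtained from `Sig` by removing all redundant partial splits,
i.e. those extended by a different element of `Sig`. -/
def sreduce (Sig : Set (Sym2 (Set X))) : Set (Sym2 (Set X)) :=
  {S | S ∈ Sig ∧ ¬ ∃ T ∈ Sig, T ≠ S ∧ SplitExtends T S}

/-- `Sig ∈ P(X)`: `Sig` is an irreducible collection of partial splits of `X`. -/
def InPX (Sig : Set (Sym2 (Set X))) : Prop :=
  (∀ S ∈ Sig, IsPartialSplit S) ∧ sreduce Sig = Sig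

/-- Two partial splits are compatible if some part of one is disjoint from some part
of the other. -/
def SplitCompatible (S T : Sym2 (Set X)) : Prop :=
  ∃ A B C D : Set X, S = s(A, B) ∧ T = s(C, D) ∧ A ∩ C = ∅

/-- Weak compatibility of a (multi)triple of partial splits: for every choice of parts,
one of the four distinguished triple intersections is empty. -/
def WeaklyCompatTriple (S1 S2 S3 : Sym2 (Set X)) : Prop :=
  ∀ A1 B1 A2 B2 A3 B3 : Set X,
    S1 = s(A1, B1) → S2 = s(A2, B2) → S3 = s(A3, B3) →
    A1 ∩ A2 ∩ A3 = ∅ ∨ B1 ∩ B2 ∩ A3 = ∅ ∨ B1 ∩ A2 ∩ B3 = ∅ ∨ A1 ∩ B2 ∩ B3 = ∅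

/-- A collection of partial splits is weakly compatible if every three of its members are. -/
def WeaklyCompatible (Sig : Set (Sym2 (Set X))) : Prop :=
  ∀ S1 ∈ Sig, ∀ S2 ∈ Sig, ∀ S3 ∈ Sig, WeaklyCompatTriple S1 S2 S3

/-- Condition of the `M`-rule for the parts `A1|B1`, `A2|B2`. -/
def mCond (A1 B1 A2 B2 : Set X) : Prop :=
  (A1 ∩ A2).Nonempty ∧ (B1 ∩ B2).Nonempty

/-- Output of the `M`-rule applied with respect to the parts `A1|B1`, `A2|B2`. -/
def mOut (A1 B1 A2 B2 : Set X) : Set (Sym2 (Set X)) :=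
  {s(A1, B1), s(A2, B2), s(A1 ∩ A2, B1 ∪ B2), s(B1 ∩ B2, A1 ∪ A2)}

/-- Condition of the `Y`-rule for the parts `A1|B1`, `A2|B2`, `A3|B3`. -/
def yCond (A1 B1 A2 B2 A3 B3 : Set X) : Prop :=
  (A1 ∩ A2 ∩ A3).Nonempty ∧ (B1 ∩ B2 ∩ A3).Nonempty ∧
    (B1 ∩ A2 ∩ B3).Nonempty ∧ A1 ∩ B2 ∩ B3 = ∅

/-- Output of the `Y`-rule applied with respect to the parts `A1|B1`, `A2|B2`, `A3|B3`. -/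
def yOut (A1 B1 A2 B2 A3 B3 : Set X) : Set (Sym2 (Set X)) :=
  {s(B1 ∪ (B2 ∩ B3), A1), s(A2 ∪ (A1 ∩ B3), B2), s(A3 ∪ (A1 ∩ B2), B3)}

/-- Condition of the `Z`-rule for the parts `A1|B1`, `A2|B2`. -/
def zCond (A1 B1 A2 B2 : Set X) : Prop :=
  (A1 ∩ A2).Nonempty ∧ (A2 ∩ B1).Nonempty ∧ (B1 ∩ B2).Nonempty ∧ A1 ∩ B2 = ∅

/-- Output of the `Z`-rule applied with respect to the parts `A1|B1`, `A2|B2`. -/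
def zOut (A1 B1 A2 B2 : Set X) : Set (Sym2 (Set X)) :=
  {s(B1 ∪ B2, A1), s(B2, A1 ∪ A2)}

/-- `Sig'` is obtained from `Sig` by a single application of the `Y`-rule. -/
def yStep (Sig Sig' : Set (Sym2 (Set X))) : Prop :=
  ∃ A1 B1 A2 B2 A3 B3 : Set X,
    s(A1, B1) ∈ Sig ∧ s(A2, B2) ∈ Sig ∧ s(A3, B3) ∈ Sig ∧
    s(A1, B1) ≠ s(A2, B2) ∧ s(A1, B1) ≠ s(A3, B3) ∧ s(A2, B2) ≠ s(A3, B3) ∧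
    yCond A1 B1 A2 B2 A3 B3 ∧
    Sig' = sreduce (Sig ∪ yOut A1 B1 A2 B2 A3 B3)

/-- `Sig'` is obtained from `Sig` by a single application of the `M`-rule. -/
def mStep (Sig Sig' : Set (Sym2 (Set X))) : Prop :=
  ∃ A1 B1 A2 B2 : Set X,
    s(A1, B1) ∈ Sig ∧ s(A2, B2) ∈ Sig ∧ s(A1, B1) ≠ s(A2, B2) ∧
    mCond A1 B1 A2 B2 ∧
    Sig' = sreduce (Sig ∪ mOut A1 B1 A2 B2)

/-- `Sig'` is obtained from `Sig` by a single non-trivial application of the `Y`-rule. -/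
def yStepNT (Sig Sig' : Set (Sym2 (Set X))) : Prop :=
  ∃ A1 B1 A2 B2 A3 B3 : Set X,
    s(A1, B1) ∈ Sig ∧ s(A2, B2) ∈ Sig ∧ s(A3, B3) ∈ Sig ∧
    s(A1, B1) ≠ s(A2, B2) ∧ s(A1, B1) ≠ s(A3, B3) ∧ s(A2, B2) ≠ s(A3, B3) ∧
    yCond A1 B1 A2 B2 A3 B3 ∧
    ¬ Preceq (sreduce (yOut A1 B1 A2 B2 A3 B3)) Sig ∧
    Sig' = sreduce (Sig ∪ yOut A1 B1 A2 B2 A3 B3)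

/-- `Sig'` is obtained from `Sig` by a single non-trivial application of the `M`-rule. -/
def mStepNT (Sig Sig' : Set (Sym2 (Set X))) : Prop :=
  ∃ A1 B1 A2 B2 : Set X,
    s(A1, B1) ∈ Sig ∧ s(A2, B2) ∈ Sig ∧ s(A1, B1) ≠ s(A2, B2) ∧
    mCond A1 B1 A2 B2 ∧
    ¬ Preceq (sreduce (mOut A1 B1 A2 B2)) Sig ∧
    Sig' = sreduce (Sig ∪ mOut A1 B1 A2 B2)

/-- `Sig` is closed under the `Y`-rule: every application of the `Y`-rule to `Sig` is trivial. -/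
def yClosed (Sig : Set (Sym2 (Set X))) : Prop :=
  ∀ A1 B1 A2 B2 A3 B3 : Set X,
    s(A1, B1) ∈ Sig → s(A2, B2) ∈ Sig → s(A3, B3) ∈ Sig →
    s(A1, B1) ≠ s(A2, B2) → s(A1, B1) ≠ s(A3, B3) → s(A2, B2) ≠ s(A3, B3) →
    yCond A1 B1 A2 B2 A3 B3 →
    Preceq (sreduce (yOut A1 B1 A2 B2 A3 B3)) Sig

/-- `Sig` is closed under the `M`-rule: every application of the `M`-rule to `Sig` is trivial. -/
def mClosed (Sig : Set (Sym2 (Set X))) : Prop :=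
  ∀ A1 B1 A2 B2 : Set X,
    s(A1, B1) ∈ Sig → s(A2, B2) ∈ Sig → s(A1, B1) ≠ s(A2, B2) →
    mCond A1 B1 A2 B2 →
    Preceq (sreduce (mOut A1 B1 A2 B2)) Sig

/-- A split closure sequence for `Sig` of length `n` with respect to the property `P` and
the non-trivial single-application relation `stepNT`: a strictly `⪯`-increasing sequence
in `P(X)` starting at `Sig` in which every term satisfying `P` is followed by the result
of one non-trivial application of the rule. -/
def IsClosureSeq (P : Set (Sym2 (Set X)) → Prop)
    (stepNT : Set (Sym2 (Set X)) → Set (Sym2 (Set X)) → Prop)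
    (Sig : Set (Sym2 (Set X))) (n : ℕ) (f : ℕ → Set (Sym2 (Set X))) : Prop :=
  f 0 = Sig ∧ (∀ i ≤ n, InPX (f i)) ∧
    (∀ i < n, P (f i) ∧ stepNT (f i) (f (i + 1)) ∧
      Preceq (f i) (f (i + 1)) ∧ f i ≠ f (i + 1))

/-- `cl` is a split closure of `Sig` (with `cl = none` playing the role of `ω`):
the last element of a split closure sequence for `Sig`, which either satisfies `P` and is
closed under the rule, or fails `P`, in which case it is replaced by `ω`. -/
def IsSplitClosure (P : Set (Sym2 (Set X)) → Prop)
    (stepNT : Set (Sym2 (Set X)) → Set (Sym2 (Set X)) → Prop)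
    (closed : Set (Sym2 (Set X)) → Prop)
    (Sig : Set (Sym2 (Set X))) (cl : Option (Set (Sym2 (Set X)))) : Prop :=
  ∃ (n : ℕ) (f : ℕ → Set (Sym2 (Set X))),
    IsClosureSeq P stepNT Sig n f ∧
    ((P (f n) ∧ closed (f n) ∧ cl = some (f n)) ∨ (¬ P (f n) ∧ cl = none))

/-- Split closure with respect to the `Y`-rule, `(P)` being weak compatibility. -/
def IsYClosure (Sig : Set (Sym2 (Set X))) (cl : Option (Set (Sym2 (Set X)))) : Prop :=
  IsSplitClosure WeaklyCompatible yStepNT yClosed Sig cl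

/-- Split closure with respect to the `M`-rule, `(P)` holding for all collections. -/
def IsMClosure (Sig : Set (Sym2 (Set X))) (cl : Option (Set (Sym2 (Set X)))) : Prop :=
  IsSplitClosure (fun _ => True) mStepNT mClosed Sig cl

/-- Split closure with respect to the combined `M/Y`-rule, `(P)` being weak compatibility. -/
def IsMYClosure (Sig : Set (Sym2 (Set X))) (cl : Option (Set (Sym2 (Set X)))) : Prop :=
  IsSplitClosure WeaklyCompatible
    (fun s s' => mStepNT s s' ∨ yStepNT s s') (fun s => mClosed s ∧ yClosed s) Sig cl

/-- `C` is an `X`-cycle: a connected graph on the vertex set `X` (`|X| ≥ 3`) in which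
every vertex has degree `2`. -/
def IsXCycle (C : SimpleGraph X) : Prop :=
  C.Connected ∧ 3 ≤ Nat.card X ∧ ∀ v : X, (C.neighborSet v).ncard = 2

/-- The partial split `S` is displayed by the `X`-cycle `C`: there are two distinct
edges of `C` whose deletion leaves one component containing one part of `S` and
another component containing the other part. -/
def DisplaysSplit (C : SimpleGraph X) (S : Sym2 (Set X)) : Prop :=
  ∃ A B : Set X, S = s(A, B) ∧
    ∃ e1 e2 : Sym2 X, e1 ∈ C.edgeSet ∧ e2 ∈ C.edgeSet ∧ e1 ≠ e2 ∧
      ∃ c1 c2 : (C.deleteEdges {e1, e2}).ConnectedComponent,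
        c1 ≠ c2 ∧ A ⊆ c1.supp ∧ B ⊆ c2.supp

/-- A collection of partial splits is displayed by `C` if each of its members is. -/
def DisplaysColl (C : SimpleGraph X) (Sig : Set (Sym2 (Set X))) : Prop :=
  ∀ S ∈ Sig, DisplaysSplit C S

/-- `cl ≠ ω` and the underlying collection is displayed by `C`. -/
def OptionDisplays (C : SimpleGraph X) (cl : Option (Set (Sym2 (Set X)))) : Prop :=
  ∃ Sig, cl = some Sig ∧ DisplaysColl C Sig

/-- The ground set `A ∪ B` of a partial split `A|B`. -/
def splitGround (S : Sym2 (Set X)) : Set X :=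
  ⋃₀ {A : Set X | A ∈ S}

/-- Membership in `P_ω(X) = P(X) ∪ {ω}`. -/
def InPOmega (x : Option (Set (Sym2 (Set X)))) : Prop :=
  x = none ∨ ∃ Sig, x = some Sig ∧ InPX Sig

/-- The order `⪯` on `P_ω(X)`, with `Sig ⪯ ω` for all `Sig` and `ω ⪯ ω`. -/
def PreceqO (x y : Option (Set (Sym2 (Set X)))) : Prop :=
  y = none ∨ ∃ Sig Sig', x = some Sig ∧ y = some Sig' ∧ Preceq Sig Sig'

/-- Split closure as a relation on `P_ω(X)`, with `⟨ω⟩ = ω`. -/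
def ClosO (cls : Set (Sym2 (Set X)) → Option (Set (Sym2 (Set X))) → Prop)
    (x y : Option (Set (Sym2 (Set X)))) : Prop :=
  (x = none ∧ y = none) ∨ ∃ Sig, x = some Sig ∧ cls Sig y

section Lemmas
variable {X : Type*}
open Set

lemma splitExtends_refl (S : Sym2 (Set X)) : SplitExtends S S := by
  induction S using Sym2.ind with
  | _ A B => exact ⟨A, B, A, B, rfl, rfl, subset_rfl, subset_rfl⟩

lemma splitExtends_mk_iff {A B C D : Set X} :
    SplitExtends s(A,B) s(C,D) ↔ (C ⊆ A ∧ D ⊆ B) ∨ (C ⊆ B ∧ D ⊆ A) := by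
  constructor
  · rintro ⟨P,Q,R,W,h1,h2,h3,h4⟩
    rw [Sym2.eq_iff] at h1 h2
    rcases h1 with ⟨rfl,rfl⟩|⟨rfl,rfl⟩ <;> rcases h2 with ⟨rfl,rfl⟩|⟨rfl,rfl⟩ <;> tauto
  · rintro (⟨h1,h2⟩|⟨h1,h2⟩)
    · exact ⟨A,B,C,D, rfl, rfl, h1, h2⟩
    · exact ⟨B,A,C,D, Sym2.eq_swap.symm, rfl, h1, h2⟩

lemma splitExtends_trans {S T U : Sym2 (Set X)} (h1 : SplitExtends S T) (h2 : SplitExtends T U) :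
    SplitExtends S U := by
  induction S using Sym2.ind with
  | _ A B =>
  induction T using Sym2.ind with
  | _ C D =>
  induction U using Sym2.ind with
  | _ E F =>
  rw [splitExtends_mk_iff] at h1 h2 ⊢
  rcases h1 with ⟨hC,hD⟩|⟨hC,hD⟩ <;> rcases h2 with ⟨hE,hF⟩|⟨hE,hF⟩
  · exact Or.inl ⟨hE.trans hC, hF.trans hD⟩
  · exact Or.inr ⟨hE.trans hD, hF.trans hC⟩
  · exact Or.inr ⟨hE.trans hC, hF.trans hD⟩
  · exact Or.inl ⟨hE.trans hD, hF.trans hC⟩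

lemma isPartialSplit_parts {S : Sym2 (Set X)} (h : IsPartialSplit S) {A B : Set X}
    (hS : S = s(A,B)) : A.Nonempty ∧ B.Nonempty ∧ A ∩ B = ∅ := by
  obtain ⟨P,Q,hPQ,hP,hQ,hd⟩ := h
  rw [hS] at hPQ
  rw [Sym2.eq_iff] at hPQ
  rw [Set.disjoint_iff_inter_eq_empty] at hd
  rcases hPQ with ⟨rfl,rfl⟩|⟨rfl,rfl⟩
  · exact ⟨hP, hQ, hd⟩
  · exact ⟨hQ, hP, by rwa [Set.inter_comm]⟩

lemma splitExtends_antisymm {S T : Sym2 (Set X)} (hS : IsPartialSplit S) (hT : IsPartialSplit T)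
    (h1 : SplitExtends S T) (h2 : SplitExtends T S) : S = T := by
  induction S using Sym2.ind with
  | _ A B =>
  induction T using Sym2.ind with
  | _ C D =>
  obtain ⟨hA, hB, hAB⟩ := isPartialSplit_parts hS rfl
  rw [splitExtends_mk_iff] at h1 h2
  rcases h1 with ⟨hC,hD⟩|⟨hC,hD⟩ <;> rcases h2 with ⟨hA',hB'⟩|⟨hA',hB'⟩
  · rw [subset_antisymm hA' hC, subset_antisymm hB' hD]
  · obtain ⟨x, hx⟩ := hA
    exact absurd (⟨hx, hD (hA' hx)⟩ : x ∈ A ∩ B) (fun hh => (hAB ▸ hh : x ∈ (∅ : Set X)))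
  · obtain ⟨x, hx⟩ := hA
    exact absurd (⟨hx, hC (hA' hx)⟩ : x ∈ A ∩ B) (fun hh => (hAB ▸ hh : x ∈ (∅ : Set X)))
  · rw [subset_antisymm hB' hC, subset_antisymm hA' hD]
    exact Sym2.eq_swap

lemma preceq_refl (Sig : Set (Sym2 (Set X))) : Preceq Sig Sig :=
  fun S hS => ⟨S, hS, splitExtends_refl S⟩

lemma preceq_trans {a b c : Set (Sym2 (Set X))} (h1 : Preceq a b) (h2 : Preceq b c) :
    Preceq a c := by
  intro S hS
  obtain ⟨T, hT, hTS⟩ := h1 S hS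
  obtain ⟨U, hU, hUT⟩ := h2 T hT
  exact ⟨U, hU, splitExtends_trans hUT hTS⟩

lemma preceq_mono_left {a b c : Set (Sym2 (Set X))} (h : a ⊆ b) (h2 : Preceq b c) :
    Preceq a c := fun S hS => h2 S (h hS)

lemma preceq_union {a b c : Set (Sym2 (Set X))} (h1 : Preceq a c) (h2 : Preceq b c) :
    Preceq (a ∪ b) c := by
  intro S hS
  rcases hS with hS | hS
  · exact h1 S hS
  · exact h2 S hS

lemma sreduce_subset (a : Set (Sym2 (Set X))) : sreduce a ⊆ a := fun _ h => h.1

lemma extends_orient {T : Sym2 (Set X)} {A B : Set X} (h : SplitExtends T s(A,B)) :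
    ∃ A' B', T = s(A',B') ∧ A ⊆ A' ∧ B ⊆ B' := by
  induction T using Sym2.ind with
  | _ P Q =>
  rw [splitExtends_mk_iff] at h
  rcases h with ⟨h1,h2⟩|⟨h1,h2⟩
  · exact ⟨P, Q, rfl, h1, h2⟩
  · exact ⟨Q, P, Sym2.eq_swap.symm, h1, h2⟩

lemma weaklyCompatible_of_preceq {Sig T : Set (Sym2 (Set X))}
    (hT : WeaklyCompatible T) (hP : Preceq Sig T) : WeaklyCompatible Sig := by
  intro S1 h1 S2 h2 S3 h3 A1 B1 A2 B2 A3 B3 e1 e2 e3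
  subst e1 e2 e3
  obtain ⟨T1, hT1, hE1⟩ := hP _ h1
  obtain ⟨T2, hT2, hE2⟩ := hP _ h2
  obtain ⟨T3, hT3, hE3⟩ := hP _ h3
  obtain ⟨A1', B1', rfl, hA1, hB1⟩ := extends_orient hE1
  obtain ⟨A2', B2', rfl, hA2, hB2⟩ := extends_orient hE2
  obtain ⟨A3', B3', rfl, hA3, hB3⟩ := extends_orient hE3
  rcases hT _ hT1 _ hT2 _ hT3 A1' B1' A2' B2' A3' B3' rfl rfl rfl with h|h|h|h
  · exact Or.inl (subset_empty_iff.mp (h ▸ inter_subset_inter (inter_subset_inter hA1 hA2) hA3))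
  · exact Or.inr (Or.inl (subset_empty_iff.mp
      (h ▸ inter_subset_inter (inter_subset_inter hB1 hB2) hA3)))
  · exact Or.inr (Or.inr (Or.inl (subset_empty_iff.mp
      (h ▸ inter_subset_inter (inter_subset_inter hB1 hA2) hB3))))
  · exact Or.inr (Or.inr (Or.inr (subset_empty_iff.mp
      (h ▸ inter_subset_inter (inter_subset_inter hA1 hB2) hB3))))

end Lemmas

section Lemmas2
variable {X : Type*}
open Set

lemma splitGround_mk (A B : Set X) : splitGround s(A,B) = A ∪ B := by
  unfold splitGround
  ext x
  simp only [Set.mem_sUnion, Set.mem_setOf_eq, Sym2.mem_iff, Set.mem_union]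
  constructor
  · rintro ⟨C, (rfl|rfl), hx⟩
    · exact Or.inl hx
    · exact Or.inr hx
  · rintro (hx|hx)
    · exact ⟨A, Or.inl rfl, hx⟩
    · exact ⟨B, Or.inr rfl, hx⟩

lemma splitGround_mono {T U : Sym2 (Set X)} (h : SplitExtends U T) :
    splitGround T ⊆ splitGround U := by
  induction T using Sym2.ind with
  | _ C D =>
  induction U using Sym2.ind with
  | _ A B =>
  rw [splitExtends_mk_iff] at h
  rw [splitGround_mk, splitGround_mk]
  rcases h with ⟨h1,h2⟩|⟨h1,h2⟩
  · exact union_subset_union h1 h2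
  · rw [Set.union_comm C D]
    exact union_subset_union h2 h1

lemma eq_of_splitExtends_ground_eq {T U : Sym2 (Set X)} (hT : IsPartialSplit T)
    (hU : IsPartialSplit U) (h : SplitExtends U T)
    (hg : splitGround T = splitGround U) : U = T := by
  induction T using Sym2.ind with
  | _ C D =>
  induction U using Sym2.ind with
  | _ A B =>
  obtain ⟨hA, hB, hAB⟩ := isPartialSplit_parts hU rfl
  rw [splitGround_mk, splitGround_mk] at hg
  rw [splitExtends_mk_iff] at h
  rcases h with ⟨h1,h2⟩|⟨h1,h2⟩
  · have hAC : A ⊆ C := by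
      intro x hx
      have : x ∈ C ∪ D := hg ▸ (Or.inl hx : x ∈ A ∪ B)
      rcases this with h|h
      · exact h
      · exact absurd (⟨hx, h2 h⟩ : x ∈ A ∩ B) (fun hh => (hAB ▸ hh : x ∈ (∅ : Set X)))
    have hBD : B ⊆ D := by
      intro x hx
      have : x ∈ C ∪ D := hg ▸ (Or.inr hx : x ∈ A ∪ B)
      rcases this with h|h
      · exact absurd (⟨h1 h, hx⟩ : x ∈ A ∩ B) (fun hh => (hAB ▸ hh : x ∈ (∅ : Set X)))
      · exact h
    rw [subset_antisymm hAC h1, subset_antisymm hBD h2]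
  · have hAD : A ⊆ D := by
      intro x hx
      have : x ∈ C ∪ D := hg ▸ (Or.inl hx : x ∈ A ∪ B)
      rcases this with h|h
      · exact absurd (⟨hx, h1 h⟩ : x ∈ A ∩ B) (fun hh => (hAB ▸ hh : x ∈ (∅ : Set X)))
      · exact h
    have hBC : B ⊆ C := by
      intro x hx
      have : x ∈ C ∪ D := hg ▸ (Or.inr hx : x ∈ A ∪ B)
      rcases this with h|h
      · exact h
      · exact absurd (⟨h2 h, hx⟩ : x ∈ A ∩ B) (fun hh => (hAB ▸ hh : x ∈ (∅ : Set X)))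
    rw [subset_antisymm hAD h2, subset_antisymm hBC h1]
    exact Sym2.eq_swap

lemma preceq_sreduce [Finite X] {Y : Set (Sym2 (Set X))} (hfin : Y.Finite)
    (hps : ∀ S ∈ Y, IsPartialSplit S) : Preceq Y (sreduce Y) := by
  intro S hS
  set M := {T ∈ Y | SplitExtends T S} with hM
  have hMfin : M.Finite := hfin.subset (fun T hT => hT.1)
  have hMne : M.Nonempty := ⟨S, hS, splitExtends_refl S⟩
  obtain ⟨T, hTM, hmax⟩ :=
    hMfin.exists_maximalFor (fun T => (splitGround T).ncard) M hMne
  refine ⟨T, ⟨hTM.1, ?_⟩, hTM.2⟩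
  rintro ⟨U, hU, hne, hext⟩
  have hUM : U ∈ M := ⟨hU, splitExtends_trans hext hTM.2⟩
  have hsub : splitGround T ⊆ splitGround U := splitGround_mono hext
  have hle : (splitGround T).ncard ≤ (splitGround U).ncard :=
    Set.ncard_le_ncard hsub (Set.toFinite _)
  have heq := le_antisymm hle (hmax hUM hle)
  have hgeq : splitGround T = splitGround U :=
    Set.eq_of_subset_of_ncard_le hsub (le_of_eq heq.symm) (Set.toFinite _)
  exact hne (eq_of_splitExtends_ground_eq (hps T hTM.1) (hps U hU) hext hgeq)

lemma preceq_antisymm {F G : Set (Sym2 (Set X))} (hF : InPX F) (hG : InPX G)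
    (h1 : Preceq F G) (h2 : Preceq G F) : F = G := by
  have key : ∀ {A B : Set (Sym2 (Set X))}, InPX A → InPX B → Preceq A B → Preceq B A →
      A ⊆ B := by
    intro A B hA hB hAB hBA S hS
    obtain ⟨T, hT, hTS⟩ := hAB S hS
    obtain ⟨S', hS', hST⟩ := hBA T hT
    have hSS : SplitExtends S' S := splitExtends_trans hST hTS
    have hSeq : S' = S := by
      by_contra hne
      have hSm : S ∈ sreduce A := hA.2.symm ▸ hS
      exact hSm.2 ⟨S', hS', hne, hSS⟩
    subst hSeq
    have : T = S' := splitExtends_antisymm (hB.1 T hT) (hA.1 S' hS) hTS hST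
    exact this ▸ hT
  exact subset_antisymm (key hF hG h1 h2) (key hG hF h2 h1)

end Lemmas2

section Lemmas3
variable {X : Type*}
open Set

lemma yOut_preceq [Finite X] {G : Set (Sym2 (Set X))}
    (hG : InPX G) (hwcG : WeaklyCompatible G) (hclG : yClosed G)
    {A1 B1 A2 B2 A3 B3 : Set X} {T1 T2 T3 : Sym2 (Set X)}
    (hT1 : T1 ∈ G) (hT2 : T2 ∈ G) (hT3 : T3 ∈ G)
    (hE1 : SplitExtends T1 s(A1,B1)) (hE2 : SplitExtends T2 s(A2,B2))
    (hE3 : SplitExtends T3 s(A3,B3))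
    (hy : yCond A1 B1 A2 B2 A3 B3) :
    Preceq (yOut A1 B1 A2 B2 A3 B3) G := by
  obtain ⟨A1', B1', rfl, hA1, hB1⟩ := extends_orient hE1
  obtain ⟨A2', B2', rfl, hA2, hB2⟩ := extends_orient hE2
  obtain ⟨A3', B3', rfl, hA3, hB3⟩ := extends_orient hE3
  obtain ⟨hne1, hne2, hne3, hemp⟩ := hy
  obtain ⟨hA1ne, hB1ne, hd1⟩ := isPartialSplit_parts (hG.1 _ hT1) rfl
  obtain ⟨hA2ne, hB2ne, hd2⟩ := isPartialSplit_parts (hG.1 _ hT2) rfl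
  obtain ⟨hA3ne, hB3ne, hd3⟩ := isPartialSplit_parts (hG.1 _ hT3) rfl
  have hne1' : (A1' ∩ A2' ∩ A3').Nonempty :=
    hne1.mono (inter_subset_inter (inter_subset_inter hA1 hA2) hA3)
  have hne2' : (B1' ∩ B2' ∩ A3').Nonempty :=
    hne2.mono (inter_subset_inter (inter_subset_inter hB1 hB2) hA3)
  have hne3' : (B1' ∩ A2' ∩ B3').Nonempty :=
    hne3.mono (inter_subset_inter (inter_subset_inter hB1 hA2) hB3)
  have hemp' : A1' ∩ B2' ∩ B3' = ∅ := by
    rcases hwcG _ hT1 _ hT2 _ hT3 A1' B1' A2' B2' A3' B3' rfl rfl rfl with h|h|h|h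
    · exact absurd hne1' (by rw [h]; exact Set.not_nonempty_empty)
    · exact absurd hne2' (by rw [h]; exact Set.not_nonempty_empty)
    · exact absurd hne3' (by rw [h]; exact Set.not_nonempty_empty)
    · exact h
  have d12 : s(A1',B1') ≠ s(A2',B2') := by
    intro h
    rw [Sym2.eq_iff] at h
    rcases h with ⟨h1,h2⟩|⟨h1,h2⟩
    · obtain ⟨x, ⟨hx1, hx2⟩, hx3⟩ := hne3'
      have hx2' : x ∈ A1' := by rw [h1]; exact hx2
      exact Set.notMem_empty x (hd1 ▸ (⟨hx2', hx1⟩ : x ∈ A1' ∩ B1'))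
    · obtain ⟨x, ⟨hx1, hx2⟩, hx3⟩ := hne1'
      have hx2' : x ∈ B1' := by rw [h2]; exact hx2
      exact Set.notMem_empty x (hd1 ▸ (⟨hx1, hx2'⟩ : x ∈ A1' ∩ B1'))
  have d13 : s(A1',B1') ≠ s(A3',B3') := by
    intro h
    rw [Sym2.eq_iff] at h
    rcases h with ⟨h1,h2⟩|⟨h1,h2⟩
    · obtain ⟨x, ⟨hx1, hx2⟩, hx3⟩ := hne2'
      have hx3' : x ∈ A1' := by rw [h1]; exact hx3
      exact Set.notMem_empty x (hd1 ▸ (⟨hx3', hx1⟩ : x ∈ A1' ∩ B1'))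
    · obtain ⟨x, ⟨hx1, hx2⟩, hx3⟩ := hne1'
      have hx3' : x ∈ B1' := by rw [h2]; exact hx3
      exact Set.notMem_empty x (hd1 ▸ (⟨hx1, hx3'⟩ : x ∈ A1' ∩ B1'))
  have d23 : s(A2',B2') ≠ s(A3',B3') := by
    intro h
    rw [Sym2.eq_iff] at h
    rcases h with ⟨h1,h2⟩|⟨h1,h2⟩
    · obtain ⟨x, ⟨hx1, hx2⟩, hx3⟩ := hne2'
      have hx3' : x ∈ A2' := by rw [h1]; exact hx3
      exact Set.notMem_empty x (hd2 ▸ (⟨hx3', hx2⟩ : x ∈ A2' ∩ B2'))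
    · obtain ⟨x, ⟨hx1, hx2⟩, hx3⟩ := hne1'
      have hx3' : x ∈ B2' := by rw [h2]; exact hx3
      exact Set.notMem_empty x (hd2 ▸ (⟨hx2, hx3'⟩ : x ∈ A2' ∩ B2'))
  have hy' : yCond A1' B1' A2' B2' A3' B3' := ⟨hne1', hne2', hne3', hemp'⟩
  have hcl := hclG A1' B1' A2' B2' A3' B3' hT1 hT2 hT3 d12 d13 d23 hy'
  have hps : ∀ S ∈ yOut A1' B1' A2' B2' A3' B3', IsPartialSplit S := by
    intro S hS
    simp only [yOut, Set.mem_insert_iff, Set.mem_singleton_iff] at hS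
    rcases hS with rfl | rfl | rfl
    · refine ⟨_, _, rfl, hB1ne.mono Set.subset_union_left, hA1ne, ?_⟩
      rw [Set.disjoint_union_left]
      constructor
      · exact Set.disjoint_iff_inter_eq_empty.mpr (by rw [Set.inter_comm]; exact hd1)
      · rw [Set.disjoint_iff_inter_eq_empty]
        ext x
        simp only [Set.mem_inter_iff, Set.mem_empty_iff_false, iff_false, not_and]
        rintro ⟨h2, h3⟩ h1
        exact Set.notMem_empty x (hemp' ▸ (⟨⟨h1, h2⟩, h3⟩ : x ∈ A1' ∩ B2' ∩ B3'))
    · refine ⟨_, _, rfl, hA2ne.mono Set.subset_union_left, hB2ne, ?_⟩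
      rw [Set.disjoint_union_left]
      constructor
      · exact Set.disjoint_iff_inter_eq_empty.mpr hd2
      · rw [Set.disjoint_iff_inter_eq_empty]
        ext x
        simp only [Set.mem_inter_iff, Set.mem_empty_iff_false, iff_false, not_and]
        rintro ⟨h1, h3⟩ h2
        exact Set.notMem_empty x (hemp' ▸ (⟨⟨h1, h2⟩, h3⟩ : x ∈ A1' ∩ B2' ∩ B3'))
    · refine ⟨_, _, rfl, hA3ne.mono Set.subset_union_left, hB3ne, ?_⟩
      rw [Set.disjoint_union_left]
      constructor
      · exact Set.disjoint_iff_inter_eq_empty.mpr hd3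
      · rw [Set.disjoint_iff_inter_eq_empty]
        ext x
        simp only [Set.mem_inter_iff, Set.mem_empty_iff_false, iff_false, not_and]
        rintro ⟨h1, h2⟩ h3
        exact Set.notMem_empty x (hemp' ▸ (⟨⟨h1, h2⟩, h3⟩ : x ∈ A1' ∩ B2' ∩ B3'))
  have hfin : (yOut A1' B1' A2' B2' A3' B3').Finite := by
    unfold yOut
    exact (Set.finite_singleton _).insert _ |>.insert _
  have hYG : Preceq (yOut A1' B1' A2' B2' A3' B3') G :=
    preceq_trans (preceq_sreduce hfin hps) hcl
  intro S hS
  simp only [yOut, Set.mem_insert_iff, Set.mem_singleton_iff] at hS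
  rcases hS with rfl | rfl | rfl
  · obtain ⟨T, hTg, hTE⟩ := hYG s(B1' ∪ (B2' ∩ B3'), A1') (Set.mem_insert _ _)
    refine ⟨T, hTg, splitExtends_trans hTE ?_⟩
    rw [splitExtends_mk_iff]
    exact Or.inl ⟨union_subset_union hB1 (inter_subset_inter hB2 hB3), hA1⟩
  · obtain ⟨T, hTg, hTE⟩ := hYG s(A2' ∪ (A1' ∩ B3'), B2')
      (Set.mem_insert_of_mem _ (Set.mem_insert _ _))
    refine ⟨T, hTg, splitExtends_trans hTE ?_⟩
    rw [splitExtends_mk_iff]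
    exact Or.inl ⟨union_subset_union hA2 (inter_subset_inter hA1 hB3), hB2⟩
  · obtain ⟨T, hTg, hTE⟩ := hYG s(A3' ∪ (A1' ∩ B2'), B3')
      (Set.mem_insert_of_mem _ (Set.mem_insert_of_mem _ rfl))
    refine ⟨T, hTg, splitExtends_trans hTE ?_⟩
    rw [splitExtends_mk_iff]
    exact Or.inl ⟨union_subset_union hA3 (inter_subset_inter hA1 hB2), hB3⟩

lemma key_step [Finite X] {G Sig Sig' : Set (Sym2 (Set X))}
    (hG : InPX G) (hwcG : WeaklyCompatible G) (hclG : yClosed G)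
    (hpre : Preceq Sig G) (hstep : yStepNT Sig Sig') : Preceq Sig' G := by
  obtain ⟨A1, B1, A2, B2, A3, B3, h1, h2, h3, _, _, _, hy, _, rfl⟩ := hstep
  obtain ⟨T1, hT1, hE1⟩ := hpre _ h1
  obtain ⟨T2, hT2, hE2⟩ := hpre _ h2
  obtain ⟨T3, hT3, hE3⟩ := hpre _ h3
  exact preceq_mono_left (sreduce_subset _)
    (preceq_union hpre (yOut_preceq hG hwcG hclG hT1 hT2 hT3 hE1 hE2 hE3 hy))

end Lemmas3

/-- for a weakly compatible `Σ ∈ P(X)`, any two split closures of `Σ`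
obtained solely via the `Y`-rule (with `(P)` being weak compatibility) are equal. -/
theorem statement11 {X : Type*} [Fintype X] (Sig : Set (Sym2 (Set X)))
    (hPX : InPX Sig) (hwc : WeaklyCompatible Sig)
    (cl1 cl2 : Option (Set (Sym2 (Set X))))
    (h1 : IsYClosure Sig cl1) (h2 : IsYClosure Sig cl2) :
    cl1 = cl2 := by
  obtain ⟨n, f, ⟨hf0, hfPX, hfstep⟩, hf⟩ := h1
  obtain ⟨m, g, ⟨hg0, hgPX, hgstep⟩, hg⟩ := h2
  have fchain : ∀ j, j ≤ n → Preceq (f 0) (f j) := by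
    intro j
    induction j with
    | zero => intro _; exact preceq_refl _
    | succ j ih =>
      intro hj
      exact preceq_trans (ih (Nat.le_of_succ_le hj))
        (hfstep j (Nat.lt_of_succ_le hj)).2.2.1
  have gchain : ∀ j, j ≤ m → Preceq (g 0) (g j) := by
    intro j
    induction j with
    | zero => intro _; exact preceq_refl _
    | succ j ih =>
      intro hj
      exact preceq_trans (ih (Nat.le_of_succ_le hj))
        (hgstep j (Nat.lt_of_succ_le hj)).2.2.1
  have push : ∀ (h : ℕ → Set (Sym2 (Set X))) (k : ℕ),
      (∀ i < k, WeaklyCompatible (h i) ∧ yStepNT (h i) (h (i+1)) ∧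
        Preceq (h i) (h (i+1)) ∧ h i ≠ h (i+1)) →
      ∀ (G : Set (Sym2 (Set X))), InPX G → WeaklyCompatible G → yClosed G →
      Preceq (h 0) G → ∀ j ≤ k, Preceq (h j) G := by
    intro h k hstep G hIG hwcG hclG h0 j
    induction j with
    | zero => intro _; exact h0
    | succ j ih =>
      intro hj
      exact key_step hIG hwcG hclG (ih (Nat.le_of_succ_le hj))
        (hstep j (Nat.lt_of_succ_le hj)).2.1
  rcases hf with ⟨hPf, hclf, hcl1⟩ | ⟨hPf, hcl1⟩ <;>
    rcases hg with ⟨hPg, hclg, hcl2⟩ | ⟨hPg, hcl2⟩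
  · have hFG : Preceq (f n) (g m) :=
      push f n hfstep (g m) (hgPX m le_rfl) hPg hclg
        (by rw [hf0, ← hg0]; exact gchain m le_rfl) n le_rfl
    have hGF : Preceq (g m) (f n) :=
      push g m hgstep (f n) (hfPX n le_rfl) hPf hclf
        (by rw [hg0, ← hf0]; exact fchain n le_rfl) m le_rfl
    rw [hcl1, hcl2]
    exact congrArg some (preceq_antisymm (hfPX n le_rfl) (hgPX m le_rfl) hFG hGF)
  · exfalso
    have hGF : Preceq (g m) (f n) :=
      push g m hgstep (f n) (hfPX n le_rfl) hPf hclf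
        (by rw [hg0, ← hf0]; exact fchain n le_rfl) m le_rfl
    exact hPg (weaklyCompatible_of_preceq hPf hGF)
  · exfalso
    have hFG : Preceq (f n) (g m) :=
      push f n hfstep (g m) (hgPX m le_rfl) hPg hclg
        (by rw [hf0, ← hg0]; exact gchain m le_rfl) n le_rfl
    exact hPf (weaklyCompatible_of_preceq hPg hFG)
  · rw [hcl1, hcl2]
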